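/- The rational function β(z) = −64 z³(z − 1)/(8z + 1) is a Belyi function: for every complex number z with 8z + 1 ≠ 0, if the derivative of β vanishes at z, then β(z) = 0 or β(z) = 1. -/

import Mathlib

/-- The rational function `β(z) = −64 z³(z − 1)/(8z + 1)` is a Belyi function: all of its
finite critical values lie in `{0, 1}`. -/
theorem belyi_S31_31 (β : ℂ → ℂ)
    (hβ : ∀ z, β z = -64 * (z ^ 3 * (z - 1)) / (8 * z + 1)) :
    ∀ z : ℂ, 8 * z + 1 ≠ 0 → deriv β z = 0 → β z = 0 ∨ β z = 1 := by
  intro z hz hd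
  have hfun : β = fun z => -64 * (z ^ 3 * (z - 1)) / (8 * z + 1) := funext hβ
  have h1 : HasDerivAt (fun z : ℂ => -64 * (z ^ 3 * (z - 1)))
      (-256 * z ^ 3 + 192 * z ^ 2) z := by
    have h : HasDerivAt (fun z : ℂ => -64 * (z ^ 3 * (z - 1))) _ z := ((hasDerivAt_pow 3 z).mul ((hasDerivAt_id z).sub_const 1)).const_mul (-64 : ℂ)
    convert h using 1
    simp
    ring
  have h2 : HasDerivAt (fun z : ℂ => 8 * z + 1) 8 z := by
    simpa using ((hasDerivAt_id z).const_mul (8 : ℂ)).add_const 1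
  have hD : HasDerivAt (fun z : ℂ => -64 * (z ^ 3 * (z - 1)) / (8 * z + 1)) _ z := h1.div h2 hz
  rw [hfun, hD.deriv, div_eq_zero_iff] at hd
  rcases hd with hd | hd
  · have hq : z ^ 2 * (8 * z ^ 2 - 4 * z - 1) = 0 := by
      linear_combination (-1/192 : ℂ) * hd
    rcases mul_eq_zero.mp hq with h0 | h0
    · left
      have : z = 0 := by
        have := pow_eq_zero_iff (n := 2) (by norm_num) |>.mp h0
        exact this
      rw [hβ, this]
      norm_num
    · right
      rw [hβ, div_eq_one_iff_eq hz]
      linear_combination (-8 * z ^ 2 + 4 * z + 1) * h0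
  · exact absurd hd (pow_ne_zero 2 hz)
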